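/- arXiv:2007.13873 — 2 statements merged into one kernel-verified Lean document; each statement's English description precedes it below -/
import Mathlib

section
/- The Itô–Hermite polynomials form an orthogonal system in L²(ℂ, e^{-|z|²} dλ(z)): for all nonnegative integers m, n, j, k, ∫_ℂ H_{m,n}(z, z̄) · conj(H_{j,k}(z, z̄)) · e^{-|z|²} dλ(z) = π · m! · n! · δ_{m,j} · δ_{n,k}, where λ is Lebesgue measure on ℂ ≅ ℝ². -/
open MeasureTheory Complex Finset

noncomputable section

/-- Wirtinger holomorphic derivative `∂_z = (1/2)(∂_x - i ∂_y)` on functions `ℂ → ℂ`. -/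
def wdz (f : ℂ → ℂ) (z : ℂ) : ℂ :=
  (1/2 : ℂ) * (fderiv ℝ f z 1 - Complex.I * fderiv ℝ f z Complex.I)

/-- Wirtinger antiholomorphic derivative `∂_z̄ = (1/2)(∂_x + i ∂_y)`. -/
def wdzbar (f : ℂ → ℂ) (z : ℂ) : ℂ :=
  (1/2 : ℂ) * (fderiv ℝ f z 1 + Complex.I * fderiv ℝ f z Complex.I)

/-- The Gaussian `e^{-|z|²}`. -/
def gauss (z : ℂ) : ℂ := Complex.exp (-(Complex.normSq z : ℂ))

/-- The Itô–Hermite (complex Hermite) polynomials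
`H_{m,n}(z,z̄) = (-1)^{m+n} e^{|z|²} ∂_z^m ∂_z̄^n (e^{-|z|²})`. -/
def Hpoly (m n : ℕ) (z : ℂ) : ℂ :=
  (-1 : ℂ)^(m+n) * Complex.exp ((Complex.normSq z : ℂ)) * (wdz^[m] (wdzbar^[n] gauss)) z

/-- The weighted planar Cauchy transform `C f(z) = (1/π) ∫ f(ξ)/(z-ξ) e^{-|ξ|²} dλ(ξ)`. -/
def cauchyT (f : ℂ → ℂ) (z : ℂ) : ℂ :=
  (1/(Real.pi : ℂ)) * ∫ ξ : ℂ, f ξ / (z - ξ) * gauss ξ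

/-- Terminating Kummer confluent hypergeometric polynomial `₁F₁(-m; c; t)`. -/
def kummer (m : ℕ) (c : ℂ) (t : ℂ) : ℂ :=
  ∑ k ∈ Finset.range (m+1),
    ((ascPochhammer ℂ k).eval (-(m:ℂ)) / (ascPochhammer ℂ k).eval c) * t^k / (k.factorial : ℂ)

/-- The Laguerre polynomial `L_n(t) = Σ_{k=0}^n (-1)^k C(n,k) t^k/k!`. -/
def Lag (n : ℕ) (t : ℂ) : ℂ :=
  ∑ k ∈ Finset.range (n+1), (-1:ℂ)^k * (n.choose k : ℂ) * t^k / (k.factorial : ℂ)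

/-- The `n`-th Bergman-type projection `P_n` onto the true poly-Bargmann space `A²_n`. -/
def projP (n : ℕ) (f : ℂ → ℂ) (z : ℂ) : ℂ :=
  (1/(Real.pi : ℂ)) *
    ∫ ξ : ℂ, Lag n (Complex.normSq (z - ξ) : ℂ) * Complex.exp ((starRingEnd ℂ) z * ξ) * f ξ * gauss ξ

/-- The Gaussian measure `e^{-|z|²} dλ(z)` on `ℂ`. -/
def gaussMeasure : Measure ℂ :=
  volume.withDensity (fun z => ENNReal.ofReal (Real.exp (-Complex.normSq z)))

section wirtAPI

variable {f g : ℂ → ℂ} {z : ℂ}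

lemma wdz_of_hasFDerivAt {f' : ℂ →L[ℝ] ℂ} (h : HasFDerivAt f f' z) :
    wdz f z = (1/2 : ℂ) * (f' 1 - Complex.I * f' Complex.I) := by
  rw [wdz, h.fderiv]

lemma wdzbar_of_hasFDerivAt {f' : ℂ →L[ℝ] ℂ} (h : HasFDerivAt f f' z) :
    wdzbar f z = (1/2 : ℂ) * (f' 1 + Complex.I * f' Complex.I) := by
  rw [wdzbar, h.fderiv]

lemma wdz_mul (hf : DifferentiableAt ℝ f z) (hg : DifferentiableAt ℝ g z) :
    wdz (fun w => f w * g w) z = wdz f z * g z + f z * wdz g z := by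
  rw [wdz_of_hasFDerivAt (hf.hasFDerivAt.fun_mul hg.hasFDerivAt), wdz, wdz]
  simp only [ContinuousLinearMap.add_apply, ContinuousLinearMap.smul_apply, smul_eq_mul]
  ring

lemma wdzbar_mul (hf : DifferentiableAt ℝ f z) (hg : DifferentiableAt ℝ g z) :
    wdzbar (fun w => f w * g w) z = wdzbar f z * g z + f z * wdzbar g z := by
  rw [wdzbar_of_hasFDerivAt (hf.hasFDerivAt.fun_mul hg.hasFDerivAt), wdzbar, wdzbar]
  simp only [ContinuousLinearMap.add_apply, ContinuousLinearMap.smul_apply, smul_eq_mul]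
  ring

lemma wdz_const (c : ℂ) : wdz (fun _ => c) z = 0 := by
  rw [wdz_of_hasFDerivAt (hasFDerivAt_const c z)]; simp

lemma wdzbar_const (c : ℂ) : wdzbar (fun _ => c) z = 0 := by
  rw [wdzbar_of_hasFDerivAt (hasFDerivAt_const c z)]; simp

lemma hasFDerivAt_conj (z : ℂ) :
    HasFDerivAt (fun w : ℂ => (starRingEnd ℂ) w) (Complex.conjCLE : ℂ →L[ℝ] ℂ) z := by
  exact Complex.conjCLE.hasFDerivAt (x := z)

@[fun_prop]
lemma diff_conj' : Differentiable ℝ (fun w : ℂ => (starRingEnd ℂ) w) :=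
  fun z => (hasFDerivAt_conj z).differentiableAt

lemma wdz_conj : wdz (fun w => (starRingEnd ℂ) w) z = 0 := by
  rw [wdz_of_hasFDerivAt (hasFDerivAt_conj z)]
  simp [Complex.conj_I]

lemma wdzbar_conj : wdzbar (fun w => (starRingEnd ℂ) w) z = 1 := by
  rw [wdzbar_of_hasFDerivAt (hasFDerivAt_conj z)]
  simp [Complex.conj_I]
  ring

lemma wdz_id : wdz (fun w => w) z = 1 := by
  rw [wdz_of_hasFDerivAt (f := fun w : ℂ => w) (hasFDerivAt_id z)]
  simp [Complex.I_mul_I]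
  ring

lemma wdzbar_id : wdzbar (fun w => w) z = 0 := by
  rw [wdzbar_of_hasFDerivAt (f := fun w : ℂ => w) (hasFDerivAt_id z)]
  simp [Complex.I_mul_I]

lemma diff_conj : DifferentiableAt ℝ (fun w : ℂ => (starRingEnd ℂ) w) z :=
  (hasFDerivAt_conj z).differentiableAt

lemma wdz_pow (b : ℕ) : wdz (fun w => w ^ b) z = b * z ^ (b - 1) := by
  induction b with
  | zero => simpa using wdz_const 1
  | succ b ih =>
    rw [show (fun w : ℂ => w ^ (b+1)) = fun w => w * w ^ b by funext w; ring]
    rw [wdz_mul (differentiableAt_fun_id) (by fun_prop), wdz_id, ih]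
    cases b with
    | zero => simp
    | succ b => push_cast [Nat.add_sub_cancel]; ring

lemma wdzbar_pow (b : ℕ) : wdzbar (fun w => w ^ b) z = 0 := by
  induction b with
  | zero => simpa using wdzbar_const 1
  | succ b ih =>
    rw [show (fun w : ℂ => w ^ (b+1)) = fun w => w * w ^ b by funext w; ring]
    rw [wdzbar_mul (differentiableAt_fun_id) (by fun_prop), wdzbar_id, ih]
    ring

lemma wdz_conj_pow (a : ℕ) : wdz (fun w => (starRingEnd ℂ) w ^ a) z = 0 := by
  induction a with
  | zero => simpa using wdz_const 1
  | succ a ih =>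
    rw [show (fun w : ℂ => (starRingEnd ℂ) w ^ (a+1))
        = fun w => (starRingEnd ℂ) w * (starRingEnd ℂ) w ^ a by funext w; ring]
    rw [wdz_mul diff_conj (by fun_prop), wdz_conj, ih]
    ring

lemma wdzbar_conj_pow (a : ℕ) :
    wdzbar (fun w => (starRingEnd ℂ) w ^ a) z = a * (starRingEnd ℂ) z ^ (a - 1) := by
  induction a with
  | zero => simpa using wdzbar_const 1
  | succ a ih =>
    rw [show (fun w : ℂ => (starRingEnd ℂ) w ^ (a+1))
        = fun w => (starRingEnd ℂ) w * (starRingEnd ℂ) w ^ a by funext w; ring]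
    rw [wdzbar_mul diff_conj (by fun_prop), wdzbar_conj, ih]
    cases a with
    | zero => simp
    | succ a => push_cast [Nat.add_sub_cancel]; ring

end wirtAPI

section gaussAPI

variable {z : ℂ}

lemma hasFDerivAt_mulconj (z : ℂ) : HasFDerivAt (fun w : ℂ => w * (starRingEnd ℂ) w)
    (z • (Complex.conjCLE : ℂ →L[ℝ] ℂ) + (starRingEnd ℂ) z • (ContinuousLinearMap.id ℝ ℂ)) z := by
  simpa using (hasFDerivAt_id z).fun_mul (hasFDerivAt_conj z)

lemma gauss_eq : gauss = fun w => Complex.exp (-(w * (starRingEnd ℂ) w)) := by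
  funext w; rw [gauss, Complex.mul_conj]

@[fun_prop]
lemma diff_gauss : Differentiable ℝ gauss := by
  rw [gauss_eq]
  intro z
  exact (((hasFDerivAt_mulconj z).neg).cexp).differentiableAt

lemma wdz_gauss : wdz gauss z = -(starRingEnd ℂ) z * gauss z := by
  nth_rewrite 1 [gauss_eq]
  rw [wdz_of_hasFDerivAt ((hasFDerivAt_mulconj z).fun_neg).cexp]
  simp only [ContinuousLinearMap.smul_apply, ContinuousLinearMap.neg_apply,
    ContinuousLinearMap.add_apply, ContinuousLinearMap.coe_smul', Pi.smul_apply,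
    Complex.conjCLE_apply, ContinuousLinearMap.coe_id', id_eq, map_one, Complex.conj_I, ContinuousLinearEquiv.coe_coe,
    smul_eq_mul, mul_one, gauss_eq]
  ring_nf
  simp only [Complex.I_sq]
  ring

lemma wdzbar_gauss : wdzbar gauss z = -z * gauss z := by
  nth_rewrite 1 [gauss_eq]
  rw [wdzbar_of_hasFDerivAt ((hasFDerivAt_mulconj z).fun_neg).cexp]
  simp only [ContinuousLinearMap.smul_apply, ContinuousLinearMap.neg_apply,
    ContinuousLinearMap.add_apply, ContinuousLinearMap.coe_smul', Pi.smul_apply,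
    Complex.conjCLE_apply, ContinuousLinearMap.coe_id', id_eq, map_one, Complex.conj_I, ContinuousLinearEquiv.coe_coe,
    smul_eq_mul, mul_one, gauss_eq]
  ring_nf
  simp only [Complex.I_sq]
  ring

lemma gauss_ne_zero : gauss z ≠ 0 := Complex.exp_ne_zero _

lemma exp_normSq_mul_gauss : Complex.exp ((Complex.normSq z : ℂ)) * gauss z = 1 := by
  rw [gauss, ← Complex.exp_add]; simp

lemma conj_gauss : (starRingEnd ℂ) (gauss z) = gauss z := by
  rw [gauss, ← Complex.exp_conj]
  congr 1
  simp

end gaussAPI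

section sumAPI

variable {z : ℂ}

lemma wdz_sum {ι : Type*} (s : Finset ι) (f : ι → ℂ → ℂ)
    (h : ∀ i ∈ s, DifferentiableAt ℝ (f i) z) :
    wdz (fun w => ∑ i ∈ s, f i w) z = ∑ i ∈ s, wdz (f i) z := by
  have H : HasFDerivAt (fun w => ∑ i ∈ s, f i w) (∑ i ∈ s, fderiv ℝ (f i) z) z :=
    HasFDerivAt.fun_sum (fun i hi => (h i hi).hasFDerivAt)
  rw [wdz_of_hasFDerivAt H]
  simp only [ContinuousLinearMap.coe_sum', Finset.sum_apply, wdz]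
  rw [Finset.mul_sum, ← Finset.sum_sub_distrib, Finset.mul_sum]

end sumAPI

def Hexp (m n : ℕ) (z : ℂ) : ℂ :=
  ∑ i ∈ Finset.range (m+1),
    (-1:ℂ)^i * (m.choose i : ℂ) * (n.descFactorial i : ℂ)
      * ((starRingEnd ℂ) z) ^ (m-i) * z ^ (n-i)

section HexpAPI

lemma nat_mul_descFactorial (n i : ℕ) :
    n * (n-1).descFactorial i = n.descFactorial (i+1) := by
  cases n with
  | zero => simp
  | succ n => rw [Nat.succ_descFactorial_succ]; simp

lemma choose_descFactorial_comm (m n i : ℕ) :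
    m.choose i * n.descFactorial i = n.choose i * m.descFactorial i := by
  rw [Nat.descFactorial_eq_factorial_mul_choose, Nat.descFactorial_eq_factorial_mul_choose]
  ring

lemma conj_Hexp (m n : ℕ) (z : ℂ) : (starRingEnd ℂ) (Hexp m n z) = Hexp n m z := by
  rw [Hexp, map_sum]
  have h1 : ∀ i ∈ Finset.range (m+1),
      (starRingEnd ℂ) ((-1:ℂ)^i * (m.choose i : ℂ) * (n.descFactorial i : ℂ)
        * ((starRingEnd ℂ) z) ^ (m-i) * z ^ (n-i))
      = (-1:ℂ)^i * (m.choose i : ℂ) * (n.descFactorial i : ℂ)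
        * z ^ (m-i) * ((starRingEnd ℂ) z) ^ (n-i) := by
    intro i _
    simp only [map_mul, map_pow, map_neg, map_one, Complex.conj_conj, map_natCast]
  rw [Finset.sum_congr rfl h1]
  -- extend both sides to range (m+n+1)
  have e1 : ∑ i ∈ Finset.range (m+1), (-1:ℂ)^i * (m.choose i : ℂ) * (n.descFactorial i : ℂ)
        * z ^ (m-i) * ((starRingEnd ℂ) z) ^ (n-i)
      = ∑ i ∈ Finset.range (m+n+1), (-1:ℂ)^i * (m.choose i : ℂ) * (n.descFactorial i : ℂ)
        * z ^ (m-i) * ((starRingEnd ℂ) z) ^ (n-i) := by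
    apply Finset.sum_subset
    · intro x hx
      simp only [Finset.mem_range] at *
      omega
    · intro x _ hx
      simp only [Finset.mem_range, not_lt] at hx
      rw [Nat.choose_eq_zero_of_lt (by omega)]
      simp
  have e2 : Hexp n m z
      = ∑ i ∈ Finset.range (m+n+1), (-1:ℂ)^i * (n.choose i : ℂ) * (m.descFactorial i : ℂ)
        * ((starRingEnd ℂ) z) ^ (n-i) * z ^ (m-i) := by
    rw [Hexp]
    apply Finset.sum_subset
    · intro x hx
      simp only [Finset.mem_range] at *
      omega
    · intro x _ hx
      simp only [Finset.mem_range, not_lt] at hx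
      rw [Nat.choose_eq_zero_of_lt (by omega)]
      simp
  rw [e1, e2]
  apply Finset.sum_congr rfl
  intro i _
  have : ((m.choose i : ℂ) * (n.descFactorial i : ℂ)) = ((n.choose i : ℂ) * (m.descFactorial i : ℂ)) := by
    push_cast [← Nat.cast_mul]
    exact_mod_cast congrArg (Nat.cast (R := ℂ)) (choose_descFactorial_comm m n i)
  calc (-1:ℂ)^i * (m.choose i : ℂ) * (n.descFactorial i : ℂ) * z ^ (m-i) * ((starRingEnd ℂ) z) ^ (n-i)
      = (-1:ℂ)^i * ((m.choose i : ℂ) * (n.descFactorial i : ℂ)) * z ^ (m-i) * ((starRingEnd ℂ) z) ^ (n-i) := by ring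
    _ = (-1:ℂ)^i * ((n.choose i : ℂ) * (m.descFactorial i : ℂ)) * z ^ (m-i) * ((starRingEnd ℂ) z) ^ (n-i) := by rw [this]
    _ = (-1:ℂ)^i * (n.choose i : ℂ) * (m.descFactorial i : ℂ) * ((starRingEnd ℂ) z) ^ (n-i) * z ^ (m-i) := by ring

end HexpAPI

section HexpRec

lemma Hexp_succ_left (m n : ℕ) (z : ℂ) :
    Hexp (m+1) n z = (starRingEnd ℂ) z * Hexp m n z - (n:ℂ) * Hexp m (n-1) z := by
  set c := (starRingEnd ℂ) z with hcdef
  have key : ∀ i ∈ Finset.range (m+1),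
      (-1:ℂ)^(i+1) * ((m+1).choose (i+1) : ℂ) * (n.descFactorial (i+1) : ℂ)
          * c ^ (m+1-(i+1)) * z ^ (n-(i+1))
      = c * ((-1:ℂ)^(i+1) * (m.choose (i+1) : ℂ) * (n.descFactorial (i+1) : ℂ)
          * c ^ (m-(i+1)) * z ^ (n-(i+1)))
        - (n:ℂ) * ((-1:ℂ)^i * (m.choose i : ℂ) * ((n-1).descFactorial i : ℂ)
          * c ^ (m-i) * z ^ ((n-1)-i)) := by
    intro i hi
    simp only [Finset.mem_range] at hi
    have hle : i ≤ m := by omega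
    have hz : z ^ (n-(i+1)) = z ^ ((n-1)-i) := by congr 1; omega
    have hd : ((n:ℕ) : ℂ) * ((n-1).descFactorial i : ℂ) = (n.descFactorial (i+1) : ℂ) := by
      rw [← Nat.cast_mul, nat_mul_descFactorial]
    have hch : ((m+1).choose (i+1) : ℂ) = (m.choose i : ℂ) + (m.choose (i+1) : ℂ) := by
      rw [← Nat.cast_add, Nat.choose_succ_succ]
    rcases eq_or_lt_of_le hle with h | h
    · have ech : (m.choose (i+1) : ℂ) = 0 := by
        rw [Nat.choose_eq_zero_of_lt (by omega)]; simp
      rw [Nat.succ_sub_succ_eq_sub, hch, ech, ← hd, hz,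
        show m - i = 0 by omega, show m - (i+1) = 0 by omega]
      push_cast
      ring
    · have hc : c ^ (m - i) = c * c ^ (m - (i+1)) := by
        rw [← pow_succ']
        congr 1
        omega
      rw [Nat.succ_sub_succ_eq_sub, hch, hz, hc, ← hd]
      ring
  have last0 : c * ((-1:ℂ)^(m+1) * (m.choose (m+1) : ℂ) * (n.descFactorial (m+1) : ℂ)
      * c ^ (m-(m+1)) * z ^ (n-(m+1))) = 0 := by
    rw [Nat.choose_succ_self]
    push_cast
    ring
  have first : (-1:ℂ)^0 * ((m+1).choose 0 : ℂ) * (n.descFactorial 0 : ℂ) * c ^ (m+1-0) * z ^ (n-0)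
      = c * ((-1:ℂ)^0 * (m.choose 0 : ℂ) * (n.descFactorial 0 : ℂ) * c ^ (m-0) * z ^ (n-0)) := by
    simp [pow_succ]
    ring
  have assemble :
      (∑ i ∈ Finset.range (m+1), c * ((-1:ℂ)^(i+1) * (m.choose (i+1) : ℂ)
          * (n.descFactorial (i+1) : ℂ) * c ^ (m-(i+1)) * z ^ (n-(i+1))))
        + c * ((-1:ℂ)^0 * (m.choose 0 : ℂ) * (n.descFactorial 0 : ℂ) * c ^ (m-0) * z ^ (n-0))
      = c * Hexp m n z := by
    have h2 := Finset.sum_range_succ' (fun i => c * ((-1:ℂ)^i * (m.choose i : ℂ)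
        * (n.descFactorial i : ℂ) * c ^ (m-i) * z ^ (n-i))) (m+1)
    have h3 := Finset.sum_range_succ (fun i => c * ((-1:ℂ)^i * (m.choose i : ℂ)
        * (n.descFactorial i : ℂ) * c ^ (m-i) * z ^ (n-i))) (m+1)
    rw [Hexp, Finset.mul_sum, ← hcdef]
    exact h2.symm.trans (h3.trans (by rw [last0, add_zero]))
  have nsum : (∑ i ∈ Finset.range (m+1),
        (n:ℂ) * ((-1:ℂ)^i * (m.choose i : ℂ) * ((n-1).descFactorial i : ℂ)
          * c ^ (m-i) * z ^ ((n-1)-i)))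
      = (n:ℂ) * Hexp m (n-1) z := by
    rw [Hexp, Finset.mul_sum, ← hcdef]
  rw [Hexp, Finset.sum_range_succ', Finset.sum_congr rfl key, Finset.sum_sub_distrib, first,
    sub_add_eq_add_sub, assemble, nsum]

end HexpRec

section HexpDeriv

@[fun_prop]
lemma diff_Hexp (m n : ℕ) : Differentiable ℝ (Hexp m n) := by
  have hfun : Hexp m n = fun w => ∑ i ∈ Finset.range (m+1),
      (-1:ℂ)^i * (m.choose i : ℂ) * (n.descFactorial i : ℂ)
        * ((starRingEnd ℂ) w) ^ (m-i) * w ^ (n-i) := rfl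
  rw [hfun]
  intro z
  apply DifferentiableAt.fun_sum
  intro i _
  fun_prop

@[fun_prop]
lemma cont_Hexp (m n : ℕ) : Continuous (Hexp m n) :=
  (diff_Hexp m n).continuous

lemma Hexp_zero_left (n : ℕ) (z : ℂ) : Hexp 0 n z = z ^ n := by
  simp [Hexp]

lemma wdz_Hexp (m n : ℕ) (z : ℂ) : wdz (Hexp m n) z = (n:ℂ) * Hexp m (n-1) z := by
  have hfun : Hexp m n = fun w => ∑ i ∈ Finset.range (m+1),
      (-1:ℂ)^i * (m.choose i : ℂ) * (n.descFactorial i : ℂ)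
        * ((starRingEnd ℂ) w) ^ (m-i) * w ^ (n-i) := rfl
  rw [hfun, wdz_sum _ _ (fun i _ => by fun_prop), Hexp, Finset.mul_sum]
  apply Finset.sum_congr rfl
  intro i _
  have e1 : wdz (fun w => (-1:ℂ)^i * (m.choose i : ℂ) * (n.descFactorial i : ℂ)
      * ((starRingEnd ℂ) w) ^ (m-i) * w ^ (n-i)) z
      = ((-1:ℂ)^i * (m.choose i : ℂ) * (n.descFactorial i : ℂ) * ((starRingEnd ℂ) z) ^ (m-i))
        * (((n-i : ℕ) : ℂ) * z ^ ((n-i) - 1)) := by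
    rw [wdz_mul (by fun_prop) (by fun_prop), wdz_pow]
    have h0 : wdz (fun w => (-1:ℂ)^i * (m.choose i : ℂ) * (n.descFactorial i : ℂ)
        * ((starRingEnd ℂ) w)^(m-i)) z = 0 := by
      rw [wdz_mul (differentiableAt_const _) (by fun_prop), wdz_const, wdz_conj_pow]
      ring
    rw [h0]
    ring
  rw [e1]
  have hdd : ((n-i : ℕ) : ℂ) * ((n.descFactorial i : ℕ) : ℂ)
      = (n : ℂ) * (((n-1).descFactorial i : ℕ) : ℂ) := by
    rw [← Nat.cast_mul, ← Nat.cast_mul, ← Nat.descFactorial_succ, ← nat_mul_descFactorial]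
  have hz2 : z ^ ((n-i) - 1) = z ^ ((n-1) - i) := by congr 1; omega
  rw [hz2]
  linear_combination ((-1:ℂ)^i * (m.choose i : ℂ) * ((starRingEnd ℂ) z)^(m-i) * z^((n-1)-i)) * hdd

lemma Hexp_succ_right (m n : ℕ) (z : ℂ) :
    Hexp m (n+1) z = z * Hexp m n z - (m:ℂ) * Hexp (m-1) n z := by
  have h := congrArg (starRingEnd ℂ) (Hexp_succ_left n m z)
  simp only [conj_Hexp, map_sub, map_mul, map_natCast, Complex.conj_conj] at h
  exact h

end HexpDeriv

section HpolyEq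

lemma iter_wdzbar_gauss (n : ℕ) :
    wdzbar^[n] gauss = fun z => (-1:ℂ)^n * z^n * gauss z := by
  induction n with
  | zero => funext z; simp
  | succ n ih =>
    rw [Function.iterate_succ_apply', ih]
    funext z
    rw [wdzbar_mul (by fun_prop) (diff_gauss z)]
    have h1 : wdzbar (fun w => (-1:ℂ)^n * w^n) z = 0 := by
      rw [wdzbar_mul (differentiableAt_const _) (by fun_prop), wdzbar_const, wdzbar_pow]
      ring
    rw [h1, wdzbar_gauss]
    ring

lemma iter_wdz_wdzbar_gauss (m n : ℕ) :
    wdz^[m] (wdzbar^[n] gauss) = fun z => (-1:ℂ)^(m+n) * Hexp m n z * gauss z := by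
  induction m with
  | zero =>
    simp only [Function.iterate_zero, id_eq]
    rw [iter_wdzbar_gauss]
    funext z
    rw [Hexp_zero_left, zero_add]
  | succ m ih =>
    rw [Function.iterate_succ_apply', ih]
    funext z
    rw [wdz_mul (by fun_prop) (diff_gauss z)]
    have h1 : wdz (fun w => (-1:ℂ)^(m+n) * Hexp m n w) z
        = (-1:ℂ)^(m+n) * ((n:ℂ) * Hexp m (n-1) z) := by
      rw [wdz_mul (differentiableAt_const _) (diff_Hexp m n z), wdz_const, wdz_Hexp]
      ring
    rw [h1, wdz_gauss, Hexp_succ_left]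
    ring

end HpolyEq

lemma Hpoly_eq (m n : ℕ) (z : ℂ) : Hpoly m n z = Hexp m n z := by
  rw [Hpoly]
  simp only [iter_wdz_wdzbar_gauss]
  have h2 : ((-1:ℂ))^(m+n) * ((-1:ℂ))^(m+n) = 1 := by
    rw [← pow_add]
    exact Even.neg_one_pow ⟨m+n, by ring⟩
  calc (-1:ℂ)^(m+n) * Complex.exp ((Complex.normSq z : ℂ)) * ((-1:ℂ)^(m+n) * Hexp m n z * gauss z)
      = ((-1:ℂ)^(m+n) * (-1:ℂ)^(m+n)) * Hexp m n z
          * (Complex.exp ((Complex.normSq z : ℂ)) * gauss z) := by ring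
    _ = Hexp m n z := by rw [h2, exp_normSq_mul_gauss]; ring

section integrability

lemma gauss_norm (z : ℂ) : ‖gauss z‖ = Real.exp (-Complex.normSq z) := by
  rw [gauss, Complex.norm_exp]
  simp

lemma pow_le_factorial_mul_exp {x : ℝ} (hx : 0 ≤ x) (N : ℕ) :
    x ^ N ≤ (N.factorial : ℝ) * Real.exp x := by
  have h := Real.sum_le_exp_of_nonneg hx (N+1)
  have h2 : x^N / (N.factorial : ℝ) ≤ ∑ i ∈ Finset.range (N+1), x^i / (i.factorial : ℝ) :=
    Finset.single_le_sum (f := fun i => x^i / (i.factorial : ℝ))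
      (fun i _ => by positivity) (Finset.self_mem_range_succ N)
  have h3 : x^N / (N.factorial : ℝ) ≤ Real.exp x := h2.trans h
  have hN : (0:ℝ) < (N.factorial : ℝ) := by positivity
  calc x^N = (x^N / (N.factorial : ℝ)) * (N.factorial : ℝ) := by field_simp
    _ ≤ Real.exp x * (N.factorial : ℝ) := mul_le_mul_of_nonneg_right h3 hN.le
    _ = (N.factorial : ℝ) * Real.exp x := by ring

lemma integrable_aux (N : ℕ) :
    Integrable (fun z : ℂ => (1 + ‖z‖^2)^N * Real.exp (-Complex.normSq z)) := by
  have hint0 := GaussianFourier.integrable_cexp_neg_mul_sq_norm_add (V := ℂ)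
    (b := (1/2:ℂ)) (by norm_num) 0 0
  have hint : Integrable (fun v : ℂ => Real.exp (-(1/2) * ‖v‖^2)) := by
    apply hint0.norm.congr
    filter_upwards with v
    rw [Complex.norm_exp]
    congr 1
    simp [← Complex.ofReal_pow]
  set C : ℝ := 2^N * (N.factorial : ℝ) * Real.exp (1/2) with hC
  apply Integrable.mono' (hint.const_mul C)
  · apply Continuous.aestronglyMeasurable
    apply Continuous.mul
    · fun_prop
    · exact Real.continuous_exp.comp (Complex.continuous_normSq.neg)
  · filter_upwards with z
    have hns : Complex.normSq z = ‖z‖^2 := by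
      rw [← Complex.sq_norm]
    rw [Real.norm_eq_abs, _root_.abs_of_nonneg (by positivity)]
    have hkey := pow_le_factorial_mul_exp (x := (1+‖z‖^2)/2) (by positivity) N
    calc (1+‖z‖^2)^N * Real.exp (-Complex.normSq z)
        = 2^N * ((1+‖z‖^2)/2)^N * Real.exp (-‖z‖^2) := by
          rw [hns, div_pow]
          field_simp
      _ ≤ 2^N * ((N.factorial : ℝ) * Real.exp ((1+‖z‖^2)/2)) * Real.exp (-‖z‖^2) := by
          gcongr
      _ = 2^N * (N.factorial : ℝ) * (Real.exp ((1+‖z‖^2)/2) * Real.exp (-‖z‖^2)) := by ring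
      _ = 2^N * (N.factorial : ℝ) * Real.exp ((1+‖z‖^2)/2 + -‖z‖^2) := by rw [Real.exp_add]
      _ = 2^N * (N.factorial : ℝ) * Real.exp (1/2 + -(1/2) * ‖z‖^2) := by
          rw [show (1+‖z‖^2)/2 + -‖z‖^2 = 1/2 + -(1/2) * ‖z‖^2 by ring]
      _ = C * Real.exp (-(1/2) * ‖z‖^2) := by rw [Real.exp_add, hC]; ring

@[fun_prop]
lemma cont_gauss : Continuous gauss := diff_gauss.continuous

lemma integrable_poly_gauss {f : ℂ → ℂ} (hf : Continuous f) (C : ℝ) (N : ℕ)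
    (hb : ∀ z, ‖f z‖ ≤ C * (1 + ‖z‖^2)^N) :
    Integrable (fun z => f z * gauss z) := by
  apply Integrable.mono' ((integrable_aux N).const_mul C)
    ((hf.mul cont_gauss).aestronglyMeasurable)
  filter_upwards with z
  rw [Pi.mul_apply, norm_mul, gauss_norm]
  calc ‖f z‖ * Real.exp (-Complex.normSq z)
      ≤ (C * (1 + ‖z‖^2)^N) * Real.exp (-Complex.normSq z) :=
        mul_le_mul_of_nonneg_right (hb z) (Real.exp_pos _).le
    _ = C * ((1 + ‖z‖^2)^N * Real.exp (-Complex.normSq z)) := by ring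

lemma norm_le_one_add_sq (t : ℝ) (ht : 0 ≤ t) : t ≤ 1 + t^2 := by nlinarith

lemma Hexp_polybound (m n : ℕ) : ∃ C : ℝ, 0 ≤ C ∧
    ∀ z : ℂ, ‖Hexp m n z‖ ≤ C * (1 + ‖z‖^2)^(m+n) := by
  refine ⟨∑ i ∈ Finset.range (m+1), ((m.choose i : ℝ) * (n.descFactorial i : ℝ)),
    Finset.sum_nonneg (fun i _ => by positivity), fun z => ?_⟩
  rw [Hexp, Finset.sum_mul]
  refine (norm_sum_le _ _).trans (Finset.sum_le_sum ?_)
  intro i hi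
  simp only [Finset.mem_range] at hi
  have h1 : ‖(-1:ℂ)^i * (m.choose i : ℂ) * (n.descFactorial i : ℂ)
      * ((starRingEnd ℂ) z) ^ (m-i) * z ^ (n-i)‖
      = (m.choose i : ℝ) * (n.descFactorial i : ℝ) * (‖z‖ ^ (m-i) * ‖z‖ ^ (n-i)) := by
    simp [norm_mul, norm_pow, RCLike.norm_conj]
    ring
  rw [h1]
  have h2 : ‖z‖ ^ (m-i) * ‖z‖ ^ (n-i) ≤ (1 + ‖z‖^2)^(m+n) := by
    rw [← pow_add]
    calc ‖z‖ ^ ((m-i)+(n-i)) ≤ (1 + ‖z‖^2) ^ ((m-i)+(n-i)) := by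
          apply pow_le_pow_left₀ (norm_nonneg z)
          exact norm_le_one_add_sq _ (norm_nonneg z)
      _ ≤ (1 + ‖z‖^2)^(m+n) := by
          apply pow_le_pow_right₀ (by nlinarith [sq_nonneg ‖z‖])
          omega
  calc (m.choose i : ℝ) * (n.descFactorial i : ℝ) * (‖z‖ ^ (m-i) * ‖z‖ ^ (n-i))
      ≤ (m.choose i : ℝ) * (n.descFactorial i : ℝ) * (1 + ‖z‖^2)^(m+n) := by
        apply mul_le_mul_of_nonneg_left h2 (by positivity)
    _ = _ := rfl

lemma integrable_HH (m n j k : ℕ) :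
    Integrable (fun z => Hexp m n z * (starRingEnd ℂ) (Hexp j k z) * gauss z) := by
  obtain ⟨C₁, hC₁, h₁⟩ := Hexp_polybound m n
  obtain ⟨C₂, hC₂, h₂⟩ := Hexp_polybound j k
  apply integrable_poly_gauss
    ((cont_Hexp m n).mul (continuous_star.comp (cont_Hexp j k))) (C₁*C₂) (m+n+(j+k))
  intro z
  simp only [Function.comp_apply, Pi.mul_apply, norm_mul, norm_star, RCLike.norm_conj]
  calc ‖Hexp m n z‖ * ‖Hexp j k z‖
      ≤ (C₁ * (1 + ‖z‖^2)^(m+n)) * (C₂ * (1 + ‖z‖^2)^(j+k)) :=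
        mul_le_mul (h₁ z) (h₂ z) (norm_nonneg _) (by positivity)
    _ = C₁*C₂ * (1 + ‖z‖^2)^(m+n+(j+k)) := by rw [pow_add]; ring

end integrability

section moment

open Real

lemma polar_pointwise (a b : ℕ) (p : ℝ × ℝ) :
    p.1 • (((starRingEnd ℂ) (Complex.polarCoord.symm p))^a * (Complex.polarCoord.symm p)^b
        * gauss (Complex.polarCoord.symm p))
    = ((p.1:ℂ)^(a+b+1) * Complex.exp (-((p.1:ℂ)^2)))
        * Complex.exp (((b:ℂ)-(a:ℂ)) * (p.2:ℂ) * Complex.I) := by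
  obtain ⟨r, θ⟩ := p
  have he : Complex.polarCoord.symm (r, θ) = (r:ℂ) * Complex.exp ((θ:ℂ) * Complex.I) := by
    rw [Complex.polarCoord_symm_apply, Complex.exp_mul_I, Complex.ofReal_cos, Complex.ofReal_sin]
  have hconj : (starRingEnd ℂ) ((r:ℂ) * Complex.exp ((θ:ℂ) * Complex.I))
      = (r:ℂ) * Complex.exp (-((θ:ℂ) * Complex.I)) := by
    rw [map_mul, Complex.conj_ofReal, ← Complex.exp_conj]
    congr 2
    simp [Complex.conj_I, Complex.conj_ofReal]
  have hns : (Complex.normSq ((r:ℂ) * Complex.exp ((θ:ℂ) * Complex.I)) : ℝ) = r^2 := by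
    rw [Complex.normSq_mul, Complex.normSq_ofReal, Complex.normSq_eq_norm_sq,
      Complex.norm_exp_ofReal_mul_I]
    ring
  simp only [he, hconj, gauss, hns]
  rw [Complex.real_smul, mul_pow, mul_pow, ← Complex.exp_nat_mul, ← Complex.exp_nat_mul]
  push_cast
  rw [show ((b:ℂ)-(a:ℂ)) * (θ:ℂ) * Complex.I
      = (a:ℂ) * -((θ:ℂ) * Complex.I) + (b:ℂ) * ((θ:ℂ) * Complex.I) by ring, Complex.exp_add]
  ring

lemma radial_integral (N : ℕ) :
    (∫ r in Set.Ioi (0:ℝ), ((r:ℂ)^(N+1) * Complex.exp (-((r:ℂ)^2))))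
      = (((1/2) * Real.Gamma ((N+2)/2) : ℝ) : ℂ) := by
  have h1 : ∀ r ∈ Set.Ioi (0:ℝ), ((r:ℂ)^(N+1) * Complex.exp (-((r:ℂ)^2)))
      = ((r^(N+1) * Real.exp (-(r^2)) : ℝ) : ℂ) := by
    intro r _
    push_cast [Complex.ofReal_exp]
    ring
  rw [setIntegral_congr_fun measurableSet_Ioi h1]
  have h3 : (∫ r in Set.Ioi (0:ℝ), ((r^(N+1) * Real.exp (-(r^2)) : ℝ) : ℂ))
      = (((∫ r in Set.Ioi (0:ℝ), r^(N+1) * Real.exp (-(r^2))) : ℝ) : ℂ) := integral_ofReal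
  rw [h3]
  norm_cast
  have h2 : ∀ r ∈ Set.Ioi (0:ℝ), r^(N+1) * Real.exp (-(r^2))
      = r ^ ((N+1 : ℕ) : ℝ) * Real.exp (-(r ^ ((2:ℕ) : ℝ))) := by
    intro r hr
    rw [Real.rpow_natCast, Real.rpow_natCast]
  rw [setIntegral_congr_fun measurableSet_Ioi h2]
  have h4 := _root_.integral_rpow_mul_exp_neg_rpow (p := ((2:ℕ):ℝ)) (q := ((N+1:ℕ):ℝ))
    (by norm_num) (by push_cast; linarith [Nat.cast_nonneg (α := ℝ) N])
  rw [h4, show ((((N+1:ℕ):ℝ))+1)/((2:ℕ):ℝ) = ((N:ℝ)+2)/2 by push_cast; ring]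
  norm_num

end moment

section angular

lemma angular_integral_ne (a b : ℕ) (hab : a ≠ b) :
    (∫ θ in Set.Ioo (-Real.pi) Real.pi, Complex.exp (((b:ℂ)-(a:ℂ)) * (θ:ℂ) * Complex.I)) = 0 := by
  have hd : ((b:ℂ) - (a:ℂ)) * Complex.I ≠ 0 := by
    apply mul_ne_zero _ Complex.I_ne_zero
    rw [sub_ne_zero]
    exact fun h => hab ((Nat.cast_inj.mp h).symm)
  have h0 : ∀ θ : ℝ, ((b:ℂ)-(a:ℂ)) * (θ:ℂ) * Complex.I = (((b:ℂ)-(a:ℂ)) * Complex.I) * (θ:ℂ) :=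
    fun θ => by ring
  simp_rw [h0]
  rw [← MeasureTheory.integral_Ioc_eq_integral_Ioo,
      ← intervalIntegral.integral_of_le (by linarith [Real.pi_pos]),
      integral_exp_mul_complex hd]
  rw [div_eq_zero_iff]
  left
  rw [sub_eq_zero, Complex.exp_eq_exp_iff_exists_int]
  refine ⟨(b:ℤ) - (a:ℤ), ?_⟩
  push_cast
  ring

lemma angular_integral_eq :
    (∫ θ in Set.Ioo (-Real.pi) Real.pi, (1:ℂ)) = ((2*Real.pi : ℝ) : ℂ) := by
  rw [setIntegral_const]
  rw [measureReal_def, Real.volume_Ioo]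
  rw [ENNReal.toReal_ofReal (by linarith [Real.pi_pos])]
  rw [show Real.pi - -Real.pi = 2*Real.pi by ring]
  simp [Complex.real_smul]

end angular

lemma moment (a b : ℕ) :
    (∫ z : ℂ, ((starRingEnd ℂ) z)^a * z^b * gauss z)
      = if a = b then (Real.pi:ℂ) * (a.factorial:ℂ) else 0 := by
  rw [← Complex.integral_comp_polarCoord_symm (fun z => ((starRingEnd ℂ) z)^a * z^b * gauss z)]
  have hpt : Set.EqOn
      (fun p : ℝ × ℝ => p.1 • (((starRingEnd ℂ) (Complex.polarCoord.symm p))^a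
        * (Complex.polarCoord.symm p)^b * gauss (Complex.polarCoord.symm p)))
      (fun p : ℝ × ℝ => (fun r : ℝ => (r:ℂ)^(a+b+1) * Complex.exp (-((r:ℂ)^2))) p.1
        * (fun θ : ℝ => Complex.exp (((b:ℂ)-(a:ℂ)) * (θ:ℂ) * Complex.I)) p.2)
      polarCoord.target :=
    fun p _ => polar_pointwise a b p
  rw [setIntegral_congr_fun polarCoord.open_target.measurableSet hpt, polarCoord_target,
    Measure.volume_eq_prod, ← Measure.prod_restrict]
  refine (MeasureTheory.integral_prod_mul (L := ℂ)
    (μ := volume.restrict (Set.Ioi 0))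
    (ν := volume.restrict (Set.Ioo (-Real.pi) Real.pi))
    (fun r : ℝ => (r:ℂ)^(a+b+1) * Complex.exp (-((r:ℂ)^2)))
    (fun θ : ℝ => Complex.exp (((b:ℂ)-(a:ℂ)) * (θ:ℂ) * Complex.I))).trans ?_
  rw [radial_integral (N := a+b)]
  by_cases h : a = b
  · subst h
    simp only [if_pos]
    have h1 : ∀ θ : ℝ, Complex.exp (((a:ℂ)-(a:ℂ)) * (θ:ℂ) * Complex.I) = 1 := by
      intro θ
      rw [sub_self, zero_mul, zero_mul, Complex.exp_zero]
    simp_rw [h1]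
    rw [angular_integral_eq]
    rw [show ((a+a:ℕ):ℝ) = 2*(a:ℝ) by push_cast; ring,
      show ((2*(a:ℝ))+2)/2 = (a:ℝ)+1 by ring, Real.Gamma_nat_eq_factorial]
    push_cast
    ring
  · rw [if_neg h, angular_integral_ne a b h, mul_zero]

section ortho

lemma IH_left_zero (j : ℕ) : ∀ k n : ℕ,
    (∫ z : ℂ, Hexp j k z * (starRingEnd ℂ) (Hexp 0 n z) * gauss z)
      = if j = 0 ∧ k = n then (Real.pi:ℂ) * (k.factorial:ℂ) else 0 := by
  induction j with
  | zero =>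
    intro k n
    have hfun : (fun z : ℂ => Hexp 0 k z * (starRingEnd ℂ) (Hexp 0 n z) * gauss z)
        = fun z : ℂ => ((starRingEnd ℂ) z)^n * z^k * gauss z := by
      funext z
      rw [Hexp_zero_left, Hexp_zero_left, map_pow]
      ring
    rw [hfun, moment n k]
    by_cases h : n = k
    · subst h; rw [if_pos rfl, if_pos ⟨rfl, rfl⟩]
    · rw [if_neg h, if_neg (by tauto)]
  | succ j ihj =>
    intro k n
    have hfun : (fun z : ℂ => Hexp (j+1) k z * (starRingEnd ℂ) (Hexp 0 n z) * gauss z)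
        = fun z : ℂ => Hexp j k z * (starRingEnd ℂ) (Hexp 0 (n+1) z) * gauss z
            - (k:ℂ) * (Hexp j (k-1) z * (starRingEnd ℂ) (Hexp 0 n z) * gauss z) := by
      funext z
      rw [Hexp_succ_left, Hexp_zero_left, Hexp_zero_left, map_pow, map_pow]
      ring
    have hB : Integrable (fun z : ℂ => (k:ℂ) * (Hexp j (k-1) z * (starRingEnd ℂ) (Hexp 0 n z)
        * gauss z)) := (integrable_HH j (k-1) 0 n).const_mul _
    rw [hfun, integral_sub (integrable_HH j k 0 (n+1)) hB, integral_const_mul,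
      ihj k (n+1), ihj (k-1) n]
    by_cases hj : j = 0
    · subst hj
      by_cases hk : k = n + 1
      · subst hk
        rw [if_pos (show (0:ℕ) = 0 ∧ n+1 = n+1 from ⟨rfl, rfl⟩),
          if_pos (show (0:ℕ) = 0 ∧ (n+1)-1 = n from ⟨rfl, by omega⟩),
          if_neg (show ¬((0:ℕ)+1 = 0 ∧ n+1 = n) from by omega)]
        push_cast [Nat.add_sub_cancel, Nat.factorial_succ]
        ring
      · rw [if_neg (show ¬((0:ℕ) = 0 ∧ k = n+1) from fun h => hk h.2),
          if_neg (show ¬((0:ℕ)+1 = 0 ∧ k = n) from by omega)]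
        rcases Nat.eq_zero_or_pos k with hk0 | hk1
        · subst hk0; simp
        · rw [if_neg (show ¬((0:ℕ) = 0 ∧ k-1 = n) from by omega)]; ring
    · rw [if_neg (show ¬(j = 0 ∧ k = n+1) from fun h => hj h.1),
        if_neg (show ¬(j = 0 ∧ k-1 = n) from fun h => hj h.1),
        if_neg (show ¬(j+1 = 0 ∧ k = n) from by omega)]
      ring

lemma delta_step (m n j k : ℕ) :
    (if m = j ∧ n = k+1 then (Real.pi:ℂ) * m.factorial * n.factorial else 0)
      + (j:ℂ) * (if m = j-1 ∧ n = k then (Real.pi:ℂ) * m.factorial * n.factorial else 0)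
      - (n:ℂ) * (if m = j ∧ n-1 = k then (Real.pi:ℂ) * m.factorial * (n-1).factorial else 0)
    = if m+1 = j ∧ n = k then (Real.pi:ℂ) * (m+1).factorial * n.factorial else 0 := by
  by_cases h1 : m = j ∧ n = k+1
  · obtain ⟨rfl, rfl⟩ := h1
    rw [if_pos (show m = m ∧ k+1 = k+1 from ⟨rfl, rfl⟩),
      if_neg (show ¬(m = m-1 ∧ k+1 = k) from by omega),
      if_pos (show m = m ∧ (k+1)-1 = k from ⟨rfl, by omega⟩),
      if_neg (show ¬(m+1 = m ∧ k+1 = k) from by omega)]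
    simp only [Nat.add_sub_cancel]
    push_cast [Nat.factorial_succ]
    ring
  · rw [if_neg h1]
    have h3 : (n:ℂ) * (if m = j ∧ n-1 = k then (Real.pi:ℂ) * m.factorial * (n-1).factorial else 0)
        = 0 := by
      rcases Nat.eq_zero_or_pos n with hn0 | hn1
      · subst hn0; simp
      · rw [if_neg (by omega)]; ring
    rw [h3]
    by_cases h4 : m+1 = j ∧ n = k
    · obtain ⟨hj, rfl⟩ := h4
      subst hj
      rw [if_pos ⟨by omega, rfl⟩, if_pos ⟨rfl, rfl⟩]
      push_cast [Nat.factorial_succ]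
      ring
    · rw [if_neg h4]
      rcases Nat.eq_zero_or_pos j with hj0 | hj1
      · subst hj0; simp
      · rw [if_neg (by omega)]; ring

lemma IH_eq : ∀ m n j k : ℕ,
    (∫ z : ℂ, Hexp m n z * (starRingEnd ℂ) (Hexp j k z) * gauss z)
      = if m = j ∧ n = k then (Real.pi:ℂ) * (m.factorial:ℂ) * (n.factorial:ℂ) else 0 := by
  intro m
  induction m with
  | zero =>
    intro n j k
    have hfun : (fun z : ℂ => Hexp 0 n z * (starRingEnd ℂ) (Hexp j k z) * gauss z)
        = fun z : ℂ => (starRingEnd ℂ) (Hexp j k z * (starRingEnd ℂ) (Hexp 0 n z) * gauss z) := by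
      funext z
      rw [map_mul, map_mul, Complex.conj_conj, conj_gauss]
      ring
    rw [hfun, integral_conj, IH_left_zero j k n]
    by_cases h : j = 0 ∧ k = n
    · obtain ⟨rfl, rfl⟩ := h
      rw [if_pos ⟨rfl, rfl⟩]
      simp [Nat.factorial_zero]
    · rw [if_neg h, if_neg (by tauto), map_zero]
  | succ m ihm =>
    intro n j k
    have hfun : (fun z : ℂ => Hexp (m+1) n z * (starRingEnd ℂ) (Hexp j k z) * gauss z)
        = fun z : ℂ => (Hexp m n z * (starRingEnd ℂ) (Hexp j (k+1) z) * gauss z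
            + (j:ℂ) * (Hexp m n z * (starRingEnd ℂ) (Hexp (j-1) k z) * gauss z))
          - (n:ℂ) * (Hexp m (n-1) z * (starRingEnd ℂ) (Hexp j k z) * gauss z) := by
      funext z
      have hc : (starRingEnd ℂ) z * (starRingEnd ℂ) (Hexp j k z)
          = (starRingEnd ℂ) (Hexp j (k+1) z) + (j:ℂ) * (starRingEnd ℂ) (Hexp (j-1) k z) := by
        rw [← map_mul, show z * Hexp j k z = Hexp j (k+1) z + (j:ℂ) * Hexp (j-1) k z
          from by rw [Hexp_succ_right]; ring, map_add, map_mul, map_natCast]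
      rw [Hexp_succ_left]
      calc ((starRingEnd ℂ) z * Hexp m n z - (n:ℂ) * Hexp m (n-1) z)
            * (starRingEnd ℂ) (Hexp j k z) * gauss z
          = Hexp m n z * ((starRingEnd ℂ) z * (starRingEnd ℂ) (Hexp j k z)) * gauss z
            - (n:ℂ) * (Hexp m (n-1) z * (starRingEnd ℂ) (Hexp j k z) * gauss z) := by ring
        _ = _ := by rw [hc]; ring
    have hB : Integrable (fun z : ℂ => (j:ℂ) * (Hexp m n z * (starRingEnd ℂ) (Hexp (j-1) k z)
        * gauss z)) := (integrable_HH m n (j-1) k).const_mul _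
    have hC : Integrable (fun z : ℂ => (n:ℂ) * (Hexp m (n-1) z * (starRingEnd ℂ) (Hexp j k z)
        * gauss z)) := (integrable_HH m (n-1) j k).const_mul _
    have hAB : Integrable (fun z : ℂ => Hexp m n z * (starRingEnd ℂ) (Hexp j (k+1) z) * gauss z
        + (j:ℂ) * (Hexp m n z * (starRingEnd ℂ) (Hexp (j-1) k z) * gauss z)) :=
      (integrable_HH m n j (k+1)).add hB
    rw [hfun, integral_sub hAB hC,
      integral_add (integrable_HH m n j (k+1)) hB,
      integral_const_mul, integral_const_mul, ihm n j (k+1), ihm n (j-1) k, ihm (n-1) j k]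
    exact delta_step m n j k

end ortho


/-- Orthogonality of the Itô–Hermite polynomials in `L²(ℂ, e^{-|z|²} dλ)`. -/
theorem stmt2 (m n j k : ℕ) :
    ∫ z : ℂ, Hpoly m n z * (starRingEnd ℂ) (Hpoly j k z) * gauss z
      = (Real.pi : ℂ) * (m.factorial : ℂ) * (n.factorial : ℂ) *
        (if m = j ∧ n = k then 1 else 0) := by
  have hfun : (fun z : ℂ => Hpoly m n z * (starRingEnd ℂ) (Hpoly j k z) * gauss z)
      = fun z : ℂ => Hexp m n z * (starRingEnd ℂ) (Hexp j k z) * gauss z := by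
    funext z; rw [Hpoly_eq, Hpoly_eq]
  rw [hfun, IH_eq m n j k]
  split_ifs with h
  · ring
  · ring
end
end

section
/- The weighted planar Cauchy transform C f(z) := (1/π) ∫_ℂ f(ξ)/(z - ξ) · e^{-|ξ|²} dλ(ξ) defines a bounded linear operator from L²(ℂ, e^{-|z|²} dλ) to itself. -/
open MeasureTheory Complex Finset

noncomputable section

namespace Stmt7Aux
open scoped ENNReal NNReal
open Metric Set

def K (z ξ : ℂ) : ℝ≥0∞ := (‖z - ξ‖₊ : ℝ≥0∞)⁻¹
def E (z : ℂ) : ℝ≥0∞ := ENNReal.ofReal (Real.exp (Complex.normSq z / 2))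
def D (z : ℂ) : ℝ≥0∞ := ENNReal.ofReal (Real.exp (-Complex.normSq z))

lemma mK2 : Measurable (fun p : ℂ × ℂ => K p.1 p.2) :=
  ((measurable_fst.sub measurable_snd).nnnorm.coe_nnreal_ennreal).inv

lemma mK (z : ℂ) : Measurable (K z) :=
  ((measurable_const.sub measurable_id).nnnorm.coe_nnreal_ennreal).inv

lemma mK' (ξ : ℂ) : Measurable (fun z => K z ξ) :=
  ((measurable_id.sub measurable_const).nnnorm.coe_nnreal_ennreal).inv

lemma mE : Measurable E :=
  ENNReal.measurable_ofReal.comp (Real.measurable_exp.comp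
    (Complex.continuous_normSq.measurable.div_const 2))

lemma mD : Measurable D :=
  ENNReal.measurable_ofReal.comp (Real.measurable_exp.comp
    Complex.continuous_normSq.measurable.neg)

lemma K_symm (z ξ : ℂ) : K z ξ = K ξ z := by
  unfold K; rw [← neg_sub ξ z, nnnorm_neg]

lemma K_ne_zero (z ξ : ℂ) : K z ξ ≠ 0 := by
  simp [K]

lemma E_ne_zero (z : ℂ) : E z ≠ 0 :=
  (ENNReal.ofReal_pos.mpr (Real.exp_pos _)).ne'

lemma E_ne_top (z : ℂ) : E z ≠ ∞ := ENNReal.ofReal_ne_top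

lemma E_one_le (z : ℂ) : 1 ≤ E z :=
  ENNReal.one_le_ofReal.mpr (Real.one_le_exp (div_nonneg (Complex.normSq_nonneg z) (by norm_num)))

lemma D_ne_zero (z : ℂ) : D z ≠ 0 :=
  (ENNReal.ofReal_pos.mpr (Real.exp_pos _)).ne'

lemma gaussMeasure_eq : gaussMeasure = volume.withDensity D := rfl

lemma lintegral_gauss {g : ℂ → ℝ≥0∞} (hg : Measurable g) :
    (∫⁻ z, g z ∂gaussMeasure) = ∫⁻ z, D z * g z ∂volume := by
  rw [gaussMeasure_eq, lintegral_withDensity_eq_lintegral_mul volume mD hg]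
  rfl

lemma integrable_gauss_half : Integrable (fun v : ℂ => Real.exp (-Complex.normSq v / 2)) := by
  have h := (GaussianFourier.integrable_cexp_neg_mul_sq_norm_add (V := ℂ) (b := (1/2:ℂ))
    (by norm_num) 0 0).norm
  refine h.congr (Filter.Eventually.of_forall fun v => ?_)
  show ‖cexp _‖ = _
  rw [Complex.norm_exp]
  congr 1
  have h2 : Complex.normSq v = ‖v‖ ^ 2 := (Complex.sq_norm v).symm
  simp [h2, ← Complex.ofReal_pow]
  ring

def Γ : ℝ≥0∞ := ∫⁻ z : ℂ, ENNReal.ofReal (Real.exp (-Complex.normSq z / 2)) ∂volume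

lemma Γ_lt_top : Γ < ∞ := by
  have h := integrable_gauss_half.2
  refine lt_of_le_of_lt (lintegral_mono fun z => ?_) h
  rw [← Real.enorm_eq_ofReal (Real.exp_pos _).le]

def B : ℝ≥0∞ := ∫⁻ w in Metric.ball (0:ℂ) 1, (‖w‖₊ : ℝ≥0∞)⁻¹ ∂volume

lemma B_lt_top : B < ∞ := by
  have hne : ∀ᵐ w ∂(volume.restrict (Metric.ball (0:ℂ) 1)), w ≠ 0 := by
    rw [ae_iff]
    refine measure_mono_null (fun w hw => ?_) (by
      simpa using (Measure.restrict_le_self (μ := volume) (s := Metric.ball (0:ℂ) 1)) {(0:ℂ)}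
        |>.trans_eq (measure_singleton 0) |>.antisymm (zero_le _) :
      (volume.restrict (Metric.ball (0:ℂ) 1)) {(0:ℂ)} = 0)
    simpa using hw
  have hae : (fun w : ℂ => (‖w‖₊ : ℝ≥0∞)⁻¹) =ᵐ[volume.restrict (Metric.ball (0:ℂ) 1)]
      fun w => ENNReal.ofReal (‖w‖⁻¹) := by
    filter_upwards [hne] with w hw
    rw [ENNReal.ofReal_inv_of_pos (norm_pos_iff.mpr hw), ofReal_norm, enorm_eq_nnnorm]
  rw [B, lintegral_congr_ae hae,
    lintegral_eq_lintegral_meas_le _ (Filter.Eventually.of_forall fun w => inv_nonneg.mpr (norm_nonneg w))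
      (measurable_norm.inv.aemeasurable)]
  have hsplit : Set.Ioc (0:ℝ) 1 ∪ Set.Ioi 1 = Set.Ioi 0 := Set.Ioc_union_Ioi_eq_Ioi zero_le_one
  rw [← hsplit, lintegral_union measurableSet_Ioi (Set.Ioc_disjoint_Ioi le_rfl)]
  have h1 : (∫⁻ t in Set.Ioc (0:ℝ) 1,
      (volume.restrict (Metric.ball (0:ℂ) 1)) {w | t ≤ ‖w‖⁻¹}) < ∞ := by
    refine lt_of_le_of_lt (lintegral_mono fun t => ?_) (?_ : (∫⁻ _ in Set.Ioc (0:ℝ) 1,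
        volume (Metric.ball (0:ℂ) 1)) < ∞)
    · exact le_trans (measure_mono (Set.subset_univ _)) (le_of_eq (Measure.restrict_apply_univ _))
    · rw [setLIntegral_const]
      exact ENNReal.mul_lt_top measure_ball_lt_top (by simp [Real.volume_Ioc])
  have h2 : (∫⁻ t in Set.Ioi (1:ℝ),
      (volume.restrict (Metric.ball (0:ℂ) 1)) {w | t ≤ ‖w‖⁻¹}) < ∞ := by
    have hb : ∀ t ∈ Set.Ioi (1:ℝ), (volume.restrict (Metric.ball (0:ℂ) 1)) {w | t ≤ ‖w‖⁻¹}
        ≤ ENNReal.ofReal (t ^ (-2:ℝ)) * (NNReal.pi : ℝ≥0∞) := by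
      intro t ht
      have ht1 : (1:ℝ) < t := ht
      have ht0 : (0:ℝ) < t := lt_trans one_pos ht1
      have hsub : {w : ℂ | t ≤ ‖w‖⁻¹} ⊆ Metric.closedBall 0 t⁻¹ := by
        intro w hw
        rcases eq_or_ne w 0 with rfl | hw0
        · simpa using (inv_nonneg.mpr ht0.le)
        · have hwpos : 0 < ‖w‖ := norm_pos_iff.mpr hw0
          have : ‖w‖ ≤ t⁻¹ := by
            have h' := inv_anti₀ ht0 hw
            rwa [inv_inv] at h'
          simpa [Metric.mem_closedBall, dist_eq_norm] using this
      calc (volume.restrict (Metric.ball (0:ℂ) 1)) {w | t ≤ ‖w‖⁻¹}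
          ≤ volume {w : ℂ | t ≤ ‖w‖⁻¹} := Measure.restrict_le_self _
        _ ≤ volume (Metric.closedBall (0:ℂ) t⁻¹) := measure_mono hsub
        _ = ENNReal.ofReal t⁻¹ ^ 2 * (NNReal.pi : ℝ≥0∞) := Complex.volume_closedBall 0 t⁻¹
        _ = ENNReal.ofReal (t ^ (-2:ℝ)) * (NNReal.pi : ℝ≥0∞) := by
            rw [← ENNReal.ofReal_pow (inv_nonneg.mpr ht0.le)]
            congr 1
            rw [show (-2:ℝ) = -((2:ℕ):ℝ) by norm_num, Real.rpow_neg ht0.le,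
              Real.rpow_natCast, inv_pow]
    refine lt_of_le_of_lt (setLIntegral_mono' measurableSet_Ioi hb) ?_
    rw [lintegral_mul_const' _ _ ENNReal.coe_ne_top]
    have hint : IntegrableOn (fun t : ℝ => t ^ (-2:ℝ)) (Set.Ioi 1) :=
      integrableOn_Ioi_rpow_of_lt (by norm_num) one_pos
    have hfin : (∫⁻ t in Set.Ioi (1:ℝ), ENNReal.ofReal (t ^ (-2:ℝ))) < ∞ := by
      refine lt_of_le_of_lt (lintegral_mono fun t => ?_) hint.2
      exact Real.ofReal_le_enorm _
    exact ENNReal.mul_lt_top hfin ENNReal.coe_lt_top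
  exact ENNReal.add_lt_top.mpr ⟨h1, h2⟩

def M : ℝ≥0∞ := B + Γ

lemma M_ne_top : M ≠ ∞ := (ENNReal.add_lt_top.mpr ⟨B_lt_top, Γ_lt_top⟩).ne

lemma schur (ξ : ℂ) : (∫⁻ z, K z ξ * E z ∂gaussMeasure) ≤ M := by
  rw [lintegral_gauss (g := fun z => K z ξ * E z) ((mK' ξ).mul mE)]
  have hpt : ∀ z, D z * (K z ξ * E z) ≤ (Metric.ball ξ 1).indicator (fun z => K z ξ) z
      + ENNReal.ofReal (Real.exp (-Complex.normSq z / 2)) := by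
    intro z
    have hDE : D z * E z = ENNReal.ofReal (Real.exp (-Complex.normSq z / 2)) := by
      rw [D, E, ← ENNReal.ofReal_mul (Real.exp_pos _).le, ← Real.exp_add]
      ring_nf
    have hre : D z * (K z ξ * E z) = K z ξ * (D z * E z) := by ring
    rw [hre, hDE]
    by_cases hz : z ∈ Metric.ball ξ 1
    · rw [Set.indicator_of_mem hz]
      have h1 : ENNReal.ofReal (Real.exp (-Complex.normSq z / 2)) ≤ 1 :=
        ENNReal.ofReal_le_one.mpr (Real.exp_le_one_iff.mpr (by
          have := Complex.normSq_nonneg z; linarith))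
      calc K z ξ * ENNReal.ofReal (Real.exp (-Complex.normSq z / 2))
          ≤ K z ξ * 1 := mul_le_mul_right h1 _
        _ = K z ξ := mul_one _
        _ ≤ _ := le_self_add
    · rw [Set.indicator_of_notMem hz, zero_add]
      have h1 : K z ξ ≤ 1 := by
        rw [K, ENNReal.inv_le_one]
        have : (1:ℝ) ≤ ‖z - ξ‖ := by
          have := hz
          rw [Metric.mem_ball, dist_eq_norm] at this
          linarith [not_lt.mp this]
        have h2 : (1:ℝ≥0) ≤ ‖z - ξ‖₊ := by exact_mod_cast this
        exact_mod_cast h2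
      calc K z ξ * ENNReal.ofReal (Real.exp (-Complex.normSq z / 2))
          ≤ 1 * ENNReal.ofReal (Real.exp (-Complex.normSq z / 2)) := mul_le_mul_left h1 _
        _ = _ := one_mul _
  refine le_trans (lintegral_mono hpt) ?_
  rw [lintegral_add_left ((mK' ξ).indicator measurableSet_ball)]
  have hind : (∫⁻ z, (Metric.ball ξ 1).indicator (fun z => K z ξ) z ∂volume) = B := by
    have hrw : ∀ z : ℂ, (Metric.ball ξ 1).indicator (fun z => K z ξ) z
        = (Metric.ball (0:ℂ) 1).indicator (fun w => (‖w‖₊ : ℝ≥0∞)⁻¹) (z + -ξ) := by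
      intro z
      have hmem : z + -ξ ∈ Metric.ball (0:ℂ) 1 ↔ z ∈ Metric.ball ξ 1 := by
        rw [mem_ball_zero_iff, Metric.mem_ball, dist_eq_norm, ← sub_eq_add_neg]
      by_cases hz : z ∈ Metric.ball ξ 1
      · rw [Set.indicator_of_mem hz, Set.indicator_of_mem (hmem.mpr hz), ← sub_eq_add_neg]
        rfl
      · rw [Set.indicator_of_notMem hz, Set.indicator_of_notMem (fun h => hz (hmem.mp h))]
    simp_rw [hrw]
    rw [MeasureTheory.lintegral_add_right_eq_self
      ((Metric.ball (0:ℂ) 1).indicator (fun w => (‖w‖₊ : ℝ≥0∞)⁻¹)) (-ξ), B,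
      ← lintegral_indicator measurableSet_ball]
  rw [hind]
  rfl

lemma schur' (ξ : ℂ) : (∫⁻ z, K z ξ * E z ∂gaussMeasure) ≤ M * E ξ :=
  le_trans (schur ξ) (by
    conv_lhs => rw [← mul_one M]
    exact mul_le_mul_right (E_one_le ξ) M)

instance : IsFiniteMeasure gaussMeasure := by
  constructor
  rw [gaussMeasure_eq, withDensity_apply _ MeasurableSet.univ, Measure.restrict_univ]
  refine lt_of_le_of_lt (lintegral_mono fun z => ?_) Γ_lt_top
  rw [D]
  exact ENNReal.ofReal_le_ofReal (Real.exp_le_exp.mpr (by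
    have := Complex.normSq_nonneg z; linarith))

lemma measurable_gauss : Measurable gauss := by
  unfold gauss
  exact Complex.measurable_exp.comp
    ((Complex.continuous_ofReal.measurable.comp Complex.continuous_normSq.measurable).neg)

lemma meas_cauchyT {f : ℂ → ℂ} (hf : StronglyMeasurable f) :
    StronglyMeasurable (cauchyT f) := by
  have h : StronglyMeasurable (fun p : ℂ × ℂ => f p.2 / (p.1 - p.2) * gauss p.2) :=
    (((hf.measurable.comp measurable_snd).div
      (measurable_fst.sub measurable_snd)).mul
      (measurable_gauss.comp measurable_snd)).stronglyMeasurable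
  exact stronglyMeasurable_const.mul h.integral_prod_right'

def G (f : ℂ → ℂ) (z : ℂ) : ℝ≥0∞ := ∫⁻ ξ, (‖f ξ‖₊ : ℝ≥0∞) * K z ξ ∂gaussMeasure

lemma nnD (ξ : ℂ) : (‖gauss ξ‖₊ : ℝ≥0∞) = D ξ := by
  rw [← enorm_eq_nnnorm, ← ofReal_norm, D]
  congr 1
  rw [gauss, Complex.norm_exp]
  simp

lemma enorm_cauchyT_le {f : ℂ → ℂ} (hf : Measurable f) (z : ℂ) :
    (‖cauchyT f z‖₊ : ℝ≥0∞) ≤ ENNReal.ofReal Real.pi⁻¹ * G f z := by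
  have hconst : ((‖(1/(Real.pi:ℂ))‖₊ : ℝ≥0∞)) = ENNReal.ofReal Real.pi⁻¹ := by
    rw [← enorm_eq_nnnorm, ← ofReal_norm]
    congr 1
    simp [map_div₀, Complex.norm_real, abs_of_pos Real.pi_pos, one_div]
  calc (‖cauchyT f z‖₊ : ℝ≥0∞)
      = (‖(1/(Real.pi:ℂ))‖₊ : ℝ≥0∞) * (‖∫ ξ, f ξ / (z - ξ) * gauss ξ‖₊ : ℝ≥0∞) := by
        rw [cauchyT, nnnorm_mul, ENNReal.coe_mul]
    _ ≤ ENNReal.ofReal Real.pi⁻¹ * ∫⁻ ξ, (‖f ξ / (z - ξ) * gauss ξ‖₊ : ℝ≥0∞) ∂volume := by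
        rw [hconst]
        exact mul_le_mul_right (enorm_integral_le_lintegral_enorm _) _
    _ = ENNReal.ofReal Real.pi⁻¹ * G f z := by
        congr 1
        have hae : ∀ᵐ ξ ∂(volume : Measure ℂ), ξ ≠ z := by
          rw [ae_iff]
          have : {ξ : ℂ | ¬ ξ ≠ z} = {z} := by ext w; simp
          rw [this]
          exact measure_singleton z
        rw [G, lintegral_gauss (g := fun ξ => (‖f ξ‖₊ : ℝ≥0∞) * K z ξ) ((hf.nnnorm.coe_nnreal_ennreal).mul (mK z))]
        apply lintegral_congr_ae
        filter_upwards [hae] with ξ hξ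
        have hzξ : z - ξ ≠ 0 := sub_ne_zero.mpr (Ne.symm hξ)
        rw [nnnorm_mul, nnnorm_div, ENNReal.coe_mul,
          ENNReal.coe_div (nnnorm_ne_zero_iff.mpr hzξ), nnD, div_eq_mul_inv]
        unfold K
        ring

lemma key {f : ℂ → ℂ} (hf : Measurable f) :
    (∫⁻ z, G f z ^ (2:ℝ) ∂gaussMeasure)
      ≤ (M * M) * ∫⁻ ξ, ((‖f ξ‖₊ : ℝ≥0∞)) ^ (2:ℝ) ∂gaussMeasure := by
  set nf : ℂ → ℝ≥0∞ := fun ξ => (‖f ξ‖₊ : ℝ≥0∞) with hnf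
  have mnf : Measurable nf := hf.nnnorm.coe_nnreal_ennreal
  have hsq : ∀ x : ℝ≥0∞, (x ^ (1/2:ℝ)) ^ (2:ℝ) = x := by
    intro x
    rw [← ENNReal.rpow_mul]
    norm_num
  have hhalf : ∀ x : ℝ≥0∞, x ^ (1/2:ℝ) * x ^ (1/2:ℝ) = x := by
    intro x
    have h := hsq x
    rwa [show (2:ℝ) = ((2:ℕ):ℝ) by norm_num, ENNReal.rpow_natCast, pow_two] at h
  have c_ne_top : ∀ ξ, nf ξ ^ (2:ℝ) * (E ξ)⁻¹ ≠ ∞ := by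
    intro ξ
    exact ENNReal.mul_ne_top
      (ENNReal.rpow_lt_top_of_nonneg (by norm_num) ENNReal.coe_ne_top).ne
      (ENNReal.inv_ne_top.mpr (E_ne_zero ξ))
  have hschurz : ∀ z : ℂ, (∫⁻ ξ, K z ξ * E ξ ∂gaussMeasure) ≤ M * E z := by
    intro z
    have h := schur' z
    simp_rw [K_symm z]
    exact h
  have h2 : ∀ z : ℂ, G f z ^ (2:ℝ)
      ≤ (M * E z) * ∫⁻ ξ, K z ξ * (nf ξ ^ (2:ℝ) * (E ξ)⁻¹) ∂gaussMeasure := by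
    intro z
    set u : ℂ → ℝ≥0∞ := fun ξ => (K z ξ) ^ (1/2:ℝ) * (E ξ) ^ (1/2:ℝ) with hu
    set v : ℂ → ℝ≥0∞ := fun ξ => (K z ξ) ^ (1/2:ℝ) * nf ξ * ((E ξ)⁻¹) ^ (1/2:ℝ) with hv
    have mu : Measurable u := ((mK z).pow_const _).mul (mE.pow_const _)
    have mv : Measurable v := (((mK z).pow_const _).mul mnf).mul (mE.inv.pow_const _)
    have huv : ∀ ξ, nf ξ * K z ξ = u ξ * v ξ := by
      intro ξ
      have hE : E ξ ^ (1/2:ℝ) * ((E ξ)⁻¹) ^ (1/2:ℝ) = 1 := by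
        rw [← ENNReal.mul_rpow_of_nonneg _ _ (by norm_num : (0:ℝ) ≤ 1/2),
          ENNReal.mul_inv_cancel (E_ne_zero ξ) (E_ne_top ξ), ENNReal.one_rpow]
      calc nf ξ * K z ξ
          = (K z ξ ^ (1/2:ℝ) * K z ξ ^ (1/2:ℝ)) * nf ξ
            * (E ξ ^ (1/2:ℝ) * ((E ξ)⁻¹) ^ (1/2:ℝ)) := by
            rw [hhalf, hE, mul_one]
            ring
        _ = u ξ * v ξ := by rw [hu, hv]; ring
    have hu2 : ∀ ξ, u ξ ^ (2:ℝ) = K z ξ * E ξ := by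
      intro ξ
      rw [hu, ENNReal.mul_rpow_of_nonneg _ _ (by norm_num : (0:ℝ) ≤ 2), hsq, hsq]
    have hv2 : ∀ ξ, v ξ ^ (2:ℝ) = K z ξ * (nf ξ ^ (2:ℝ) * (E ξ)⁻¹) := by
      intro ξ
      rw [hv, ENNReal.mul_rpow_of_nonneg _ _ (by norm_num : (0:ℝ) ≤ 2),
        ENNReal.mul_rpow_of_nonneg _ _ (by norm_num : (0:ℝ) ≤ 2), hsq, hsq]
      ring
    have hCS : G f z ≤ (∫⁻ ξ, u ξ ^ (2:ℝ) ∂gaussMeasure) ^ (1/2:ℝ)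
        * (∫⁻ ξ, v ξ ^ (2:ℝ) ∂gaussMeasure) ^ (1/2:ℝ) := by
      have h := ENNReal.lintegral_mul_le_Lp_mul_Lq gaussMeasure
        (Real.HolderConjugate.two_two)
        mu.aemeasurable mv.aemeasurable
      simp only [Pi.mul_apply] at h
      calc G f z = ∫⁻ ξ, u ξ * v ξ ∂gaussMeasure := by
            rw [G]
            exact lintegral_congr huv
        _ ≤ _ := h
    refine le_trans (ENNReal.rpow_le_rpow hCS (by norm_num : (0:ℝ) ≤ 2)) ?_
    rw [ENNReal.mul_rpow_of_nonneg _ _ (by norm_num : (0:ℝ) ≤ 2), hsq, hsq]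
    simp_rw [hu2, hv2]
    exact mul_le_mul_left (hschurz z) _
  have mswap : Measurable (fun p : ℂ × ℂ =>
      E p.1 * (K p.1 p.2 * (nf p.2 ^ (2:ℝ) * (E p.2)⁻¹))) :=
    (mE.comp measurable_fst).mul (mK2.mul
      (((mnf.comp measurable_snd).pow_const _).mul (mE.comp measurable_snd).inv))
  calc (∫⁻ z, G f z ^ (2:ℝ) ∂gaussMeasure)
      ≤ ∫⁻ z, (M * E z) * ∫⁻ ξ, K z ξ * (nf ξ ^ (2:ℝ) * (E ξ)⁻¹) ∂gaussMeasure ∂gaussMeasure :=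
        lintegral_mono h2
    _ = M * ∫⁻ z, E z * ∫⁻ ξ, K z ξ * (nf ξ ^ (2:ℝ) * (E ξ)⁻¹) ∂gaussMeasure ∂gaussMeasure := by
        simp_rw [mul_assoc]
        rw [lintegral_const_mul' _ _ M_ne_top]
    _ = M * ∫⁻ z, ∫⁻ ξ, E z * (K z ξ * (nf ξ ^ (2:ℝ) * (E ξ)⁻¹)) ∂gaussMeasure ∂gaussMeasure := by
        congr 1
        exact lintegral_congr fun z => (lintegral_const_mul' _ _ (E_ne_top z)).symm
    _ = M * ∫⁻ ξ, ∫⁻ z, E z * (K z ξ * (nf ξ ^ (2:ℝ) * (E ξ)⁻¹)) ∂gaussMeasure ∂gaussMeasure := by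
        congr 1
        exact lintegral_lintegral_swap mswap.aemeasurable
    _ = M * ∫⁻ ξ, (nf ξ ^ (2:ℝ) * (E ξ)⁻¹) * ∫⁻ z, K z ξ * E z ∂gaussMeasure ∂gaussMeasure := by
        congr 1
        refine lintegral_congr fun ξ => ?_
        rw [← lintegral_const_mul' _ _ (c_ne_top ξ)]
        exact lintegral_congr fun z => by ring
    _ ≤ M * ∫⁻ ξ, (nf ξ ^ (2:ℝ) * (E ξ)⁻¹) * (M * E ξ) ∂gaussMeasure := by
        refine mul_le_mul_right (lintegral_mono fun ξ => mul_le_mul_right (schur' ξ) _) M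
    _ = (M * M) * ∫⁻ ξ, nf ξ ^ (2:ℝ) ∂gaussMeasure := by
        have hpt : ∀ ξ, (nf ξ ^ (2:ℝ) * (E ξ)⁻¹) * (M * E ξ) = M * nf ξ ^ (2:ℝ) := by
          intro ξ
          calc (nf ξ ^ (2:ℝ) * (E ξ)⁻¹) * (M * E ξ)
              = M * nf ξ ^ (2:ℝ) * ((E ξ)⁻¹ * E ξ) := by ring
            _ = M * nf ξ ^ (2:ℝ) := by
                rw [ENNReal.inv_mul_cancel (E_ne_zero ξ) (E_ne_top ξ), mul_one]
        simp_rw [hpt]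
        rw [lintegral_const_mul' _ _ M_ne_top, mul_assoc]

lemma rpow_half_sq (x : ℝ≥0∞) : (x ^ (1/2:ℝ)) ^ (2:ℝ) = x := by
  rw [← ENNReal.rpow_mul]; norm_num

lemma rpow_sq_half (x : ℝ≥0∞) : (x ^ (2:ℝ)) ^ (1/2:ℝ) = x := by
  rw [← ENNReal.rpow_mul]; norm_num

lemma mul_self_rpow_half (x : ℝ≥0∞) : (x * x) ^ (1/2:ℝ) = x := by
  rw [ENNReal.mul_rpow_of_nonneg _ _ (by norm_num : (0:ℝ) ≤ 1/2)]
  have h := rpow_half_sq x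
  rwa [show (2:ℝ) = ((2:ℕ):ℝ) by norm_num, ENNReal.rpow_natCast, pow_two] at h

end Stmt7Aux

open Stmt7Aux
open scoped ENNReal NNReal

/-- The weighted planar Cauchy transform is bounded on `L²(ℂ, e^{-|z|²} dλ)`. -/
theorem stmt7 :
    ∃ C : ℝ, 0 ≤ C ∧ ∀ f : ℂ → ℂ, MemLp f 2 gaussMeasure →
      MemLp (cauchyT f) 2 gaussMeasure ∧
      eLpNorm (cauchyT f) 2 gaussMeasure ≤ ENNReal.ofReal C * eLpNorm f 2 gaussMeasure := by
  classical
  refine ⟨Real.pi⁻¹ * M.toReal,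
    mul_nonneg (inv_nonneg.mpr Real.pi_pos.le) ENNReal.toReal_nonneg, ?_⟩
  intro f hf
  obtain ⟨hmeas, hfin⟩ := hf
  set f' : ℂ → ℂ := hmeas.mk f with hf'def
  have hsm : StronglyMeasurable f' := hmeas.stronglyMeasurable_mk
  have hae : f =ᵐ[gaussMeasure] f' := hmeas.ae_eq_mk
  have haevol : f =ᵐ[volume] f' := by
    rw [gaussMeasure_eq] at hae
    exact (withDensity_ae_eq mD.aemeasurable
      (Filter.Eventually.of_forall fun z => D_ne_zero z)).mp hae
  have hCeq : cauchyT f = cauchyT f' := by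
    funext z
    unfold cauchyT
    congr 1
    apply integral_congr_ae
    filter_upwards [haevol] with ξ hξ
    rw [hξ]
  have hofC : ENNReal.ofReal (Real.pi⁻¹ * M.toReal) = ENNReal.ofReal Real.pi⁻¹ * M := by
    rw [ENNReal.ofReal_mul (inv_nonneg.mpr Real.pi_pos.le), ENNReal.ofReal_toReal M_ne_top]
  have hsnorm : eLpNorm (cauchyT f') 2 gaussMeasure
      ≤ ENNReal.ofReal Real.pi⁻¹ * M * eLpNorm f' 2 gaussMeasure := by
    rw [eLpNorm_eq_lintegral_rpow_enorm_toReal two_ne_zero ENNReal.ofNat_ne_top,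
      eLpNorm_eq_lintegral_rpow_enorm_toReal two_ne_zero ENNReal.ofNat_ne_top]
    simp only [ENNReal.toReal_ofNat]
    calc (∫⁻ z, ((‖cauchyT f' z‖₊ : ℝ≥0∞)) ^ (2:ℝ) ∂gaussMeasure) ^ (1/(2:ℝ))
        ≤ (∫⁻ z, (ENNReal.ofReal Real.pi⁻¹ * G f' z) ^ (2:ℝ) ∂gaussMeasure) ^ (1/(2:ℝ)) := by
          refine ENNReal.rpow_le_rpow ?_ (by norm_num)
          exact lintegral_mono fun z =>
            ENNReal.rpow_le_rpow (enorm_cauchyT_le hsm.measurable z) (by norm_num)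
      _ = ENNReal.ofReal Real.pi⁻¹ * (∫⁻ z, G f' z ^ (2:ℝ) ∂gaussMeasure) ^ (1/(2:ℝ)) := by
          simp_rw [ENNReal.mul_rpow_of_nonneg _ _ (by norm_num : (0:ℝ) ≤ 2)]
          rw [lintegral_const_mul' _ _
            (ENNReal.rpow_lt_top_of_nonneg (by norm_num) ENNReal.ofReal_ne_top).ne,
            ENNReal.mul_rpow_of_nonneg _ _ (by norm_num : (0:ℝ) ≤ 1/2), rpow_sq_half]
      _ ≤ ENNReal.ofReal Real.pi⁻¹
          * ((M * M) * ∫⁻ ξ, ((‖f' ξ‖₊ : ℝ≥0∞)) ^ (2:ℝ) ∂gaussMeasure) ^ (1/(2:ℝ)) :=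
          mul_le_mul_right (ENNReal.rpow_le_rpow (key hsm.measurable) (by norm_num)) _
      _ = ENNReal.ofReal Real.pi⁻¹ * M
          * (∫⁻ ξ, ((‖f' ξ‖₊ : ℝ≥0∞)) ^ (2:ℝ) ∂gaussMeasure) ^ (1/(2:ℝ)) := by
          rw [ENNReal.mul_rpow_of_nonneg _ _ (by norm_num : (0:ℝ) ≤ 1/2),
            mul_self_rpow_half, mul_assoc]
  have hbound : eLpNorm (cauchyT f) 2 gaussMeasure
      ≤ ENNReal.ofReal (Real.pi⁻¹ * M.toReal) * eLpNorm f 2 gaussMeasure := by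
    rw [hCeq, eLpNorm_congr_ae hae, hofC]
    exact hsnorm
  refine ⟨⟨?_, lt_of_le_of_lt hbound (ENNReal.mul_lt_top ENNReal.ofReal_lt_top hfin)⟩, hbound⟩
  rw [hCeq]
  exact (meas_cauchyT hsm).aestronglyMeasurable
end
end
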